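/- For a connected simple graph G with maximum degree Δ(G), the edge metric dimension satisfies β_E(G) ≥ ⌈log₂ Δ(G)⌉. -/

import Mathlib

open SimpleGraph

/-- Distance from a vertex `w` to an edge `e` (as a `Sym2`). -/
noncomputable def edist {V : Type*} (G : SimpleGraph V) (w : V) (e : Sym2 V) : Nat :=
  Sym2.lift ⟨fun u v => min (G.dist w u) (G.dist w v), fun u v => min_comm _ _⟩ e

/-- `S` is a mixed resolving set: every two distinct elements of `V ∪ E`
are distinguished by the distance to some vertex of `S`. -/
def MixedResolvingSet {V : Type*} (G : SimpleGraph V) (S : Set V) : Prop :=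
  (∀ u v : V, u ≠ v → ∃ w ∈ S, G.dist w u ≠ G.dist w v) ∧
  (∀ e ∈ G.edgeSet, ∀ f ∈ G.edgeSet, e ≠ f → ∃ w ∈ S, edist G w e ≠ edist G w f) ∧
  (∀ u : V, ∀ e ∈ G.edgeSet, ∃ w ∈ S, G.dist w u ≠ edist G w e)

/-- The mixed metric dimension of `G`. -/
noncomputable def mixedDim {V : Type*} (G : SimpleGraph V) : Nat :=
  sInf {n | ∃ S : Set V, MixedResolvingSet G S ∧ S.ncard = n}

/-- `S` resolves all pairs of vertices. -/
def ResolvingSet {V : Type*} (G : SimpleGraph V) (S : Set V) : Prop :=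
  ∀ u v : V, u ≠ v → ∃ w ∈ S, G.dist w u ≠ G.dist w v

/-- `S` resolves all pairs of edges. -/
def EdgeResolvingSet {V : Type*} (G : SimpleGraph V) (S : Set V) : Prop :=
  ∀ e ∈ G.edgeSet, ∀ f ∈ G.edgeSet, e ≠ f → ∃ w ∈ S, edist G w e ≠ edist G w f

/-- The metric dimension of `G`. -/
noncomputable def metricDim {V : Type*} (G : SimpleGraph V) : Nat :=
  sInf {n | ∃ S : Set V, ResolvingSet G S ∧ S.ncard = n}

/-- The edge metric dimension of `G`. -/
noncomputable def edgeDim {V : Type*} (G : SimpleGraph V) : Nat :=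
  sInf {n | ∃ S : Set V, EdgeResolvingSet G S ∧ S.ncard = n}

lemma edist_mk {V : Type*} (G : SimpleGraph V) (w u v : V) :
    edist G w s(u, v) = min (G.dist w u) (G.dist w v) := rfl

lemma univ_resolves {V : Type*} (G : SimpleGraph V) (hG : G.Connected) :
    EdgeResolvingSet G Set.univ := by
  intro e he f hf hef
  induction e using Sym2.ind with | _ a b =>
  induction f using Sym2.ind with | _ c d =>
  rw [mem_edgeSet] at he hf
  -- find a vertex of e not in f
  have hab : a ≠ b := he.ne
  have key : ∀ u : V, u ≠ c → u ≠ d →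
      0 < edist G u s(c,d) := by
    intro u huc hud
    rw [edist_mk]
    exact lt_min (hG.pos_dist_of_ne huc) (hG.pos_dist_of_ne hud)
  by_cases hac : a = c
  · -- then b ≠ c, b ≠ d (else edges equal)
    subst hac
    have hbd : b ≠ d := fun h => hef (by rw [h])
    have hbc : b ≠ a := fun h => hab h.symm
    refine ⟨b, trivial, ?_⟩
    have h1 : edist G b s(a,b) = 0 := by
      simp [edist_mk, SimpleGraph.dist_self]
    have h2 : 0 < edist G b s(a,d) := key b hbc hbd
    omega
  · by_cases had : a = d
    · subst had
      have hbc : b ≠ c := fun h => hef (by rw [h, Sym2.eq_swap])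
      have hba : b ≠ a := fun h => hab h.symm
      refine ⟨b, trivial, ?_⟩
      have h1 : edist G b s(a,b) = 0 := by simp [edist_mk, SimpleGraph.dist_self]
      have h2 : 0 < edist G b s(c,a) := key b hbc hba
      omega
    · refine ⟨a, trivial, ?_⟩
      have h1 : edist G a s(a,b) = 0 := by simp [edist_mk, SimpleGraph.dist_self]
      have h2 : 0 < edist G a s(c,d) := key a hac had
      omega

theorem stmt_15 {V : Type*} [Fintype V] (G : SimpleGraph V) [DecidableRel G.Adj]
    (hG : G.Connected) :
    edgeDim G ≥ Nat.clog 2 G.maxDegree := by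
  classical
  have hne : Nonempty V := hG.nonempty
  obtain ⟨v, hv⟩ := G.exists_maximal_degree_vertex
  -- obtain an edge resolving set of cardinality edgeDim G
  have hset : {n | ∃ S : Set V, EdgeResolvingSet G S ∧ S.ncard = n}.Nonempty :=
    ⟨(Set.univ : Set V).ncard, Set.univ, univ_resolves G hG, rfl⟩
  obtain ⟨S, hS, hScard⟩ := Nat.sInf_mem hset
  have hSfin : S.Finite := Set.toFinite S
  haveI : Fintype S := hSfin.fintype
  -- define the injection from neighbors of v into S → Bool
  set n := edgeDim G with hn
  have hcardS : Fintype.card S = n := by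
    rw [hn, edgeDim, ← hScard, Set.ncard_eq_toFinset_card']; simp
  -- key: Δ ≤ 2 ^ n
  have hdeg : G.degree v ≤ 2 ^ n := by
    have hinj : Function.Injective
        (fun (u : G.neighborFinset v) (w : S) =>
          decide (edist G (w : V) s(v, (u : V)) < G.dist (w : V) v)) := by
      intro u1 u2 h
      by_contra hne12
      have hadj1 : G.Adj v u1 := (G.mem_neighborFinset v u1).mp u1.2
      have hadj2 : G.Adj v u2 := (G.mem_neighborFinset v u2).mp u2.2
      have hedges : s(v, (u1 : V)) ≠ s(v, (u2 : V)) := by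
        intro h'
        exact hne12 (Subtype.ext (Sym2.congr_right.mp h'))
      obtain ⟨w, hwS, hwd⟩ := hS _ (G.mem_edgeSet.mpr hadj1) _ (G.mem_edgeSet.mpr hadj2) hedges
      apply hwd
      have hkey : ∀ u : V, G.Adj v u →
          G.dist w v - 1 ≤ edist G w s(v, u) ∧ edist G w s(v, u) ≤ G.dist w v := by
        intro u hadj
        rw [edist_mk]
        constructor
        · have htri : G.dist w v ≤ G.dist w u + G.dist u v :=
            hG.dist_triangle
          have h1 : G.dist u v = 1 := dist_eq_one_iff_adj.mpr hadj.symm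
          omega
        · exact min_le_left _ _
      have h1 := hkey u1 hadj1
      have h2 := hkey u2 hadj2
      have hflag := congrFun h ⟨w, hwS⟩
      simp only [decide_eq_decide] at hflag
      simp only [edist_mk] at h1 h2 hflag ⊢
      omega
    calc G.degree v = Fintype.card (G.neighborFinset v) := by
          rw [Fintype.card_coe, G.card_neighborFinset_eq_degree]
      _ ≤ Fintype.card (S → Bool) := Fintype.card_le_of_injective _ hinj
      _ = 2 ^ n := by simp [Fintype.card_fun, hcardS]
  rw [ge_iff_le, hv]
  exact (Nat.clog_le_iff_le_pow (by norm_num)).mpr hdeg
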